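/- BGA reduces loss at least as much as UGA: with a□ = α□(p,π) (BGA minimizer over Q□_π, satisfying the KKT conditions) and a★ = α★(p,π) (UGA minimizer over Q_π, satisfying Lagrange conditions), for any y ∈ Q□_π: Σ_i [d_φ(p_{i·}, y_{i·}) − d_φ(a□_{i·}, y_{i·})] ≥ Σ_i d_φ(p_{i·}, a□_{i·}) ≥ Σ_i d_φ(p_{i·}, a★_{i·}) = Σ_i [d_φ(p_{i·}, y_{i·}) − d_φ(a★_{i·}, y_{i·})]. -/

import Mathlib

/-- Bregman divergence of `φ` with gradient map `g`. -/
noncomputable def bregman {k : ℕ} (φ : (Fin k → ℝ) → ℝ) (g : (Fin k → ℝ) → Fin k → ℝ)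
    (p q : Fin k → ℝ) : ℝ :=
  φ q - φ p - ∑ j, (q j - p j) * g p j

/-- The set `Q_π` of adjusted prediction matrices: rows sum to 1, column means equal `π`. -/
def Qpi (n k : ℕ) (π : Fin k → ℝ) : Set (Fin n → Fin k → ℝ) :=
  {a | (∀ i, ∑ j, a i j = 1) ∧ (∀ j, (1 / (n : ℝ)) * ∑ i, a i j = π j)}

/-- The bounded version `Q□_π`, additionally requiring nonnegative entries. -/
def QpiB (n k : ℕ) (π : Fin k → ℝ) : Set (Fin n → Fin k → ℝ) :=
  {a ∈ Qpi n k π | ∀ i j, 0 ≤ a i j}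



-- tangent line inequality for convex φ with gradient g
lemma tangent_le {k : ℕ} (φ : (Fin k → ℝ) → ℝ) (g : (Fin k → ℝ) → Fin k → ℝ)
    (hφ : ConvexOn ℝ Set.univ φ)
    (hg : ∀ x, HasGradientAt (fun y : EuclideanSpace ℝ (Fin k) => φ ((WithLp.equiv 2 (Fin k → ℝ)) y))
      ((WithLp.equiv 2 (Fin k → ℝ)).symm (g x)) ((WithLp.equiv 2 (Fin k → ℝ)).symm x))
    (x y : Fin k → ℝ) : ∑ j, (y j - x j) * g x j ≤ φ y - φ x := by
  set e := WithLp.equiv 2 (Fin k → ℝ)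
  set v : EuclideanSpace ℝ (Fin k) := e.symm y - e.symm x with hv
  have hc : ∀ t : ℝ, HasDerivAt (fun t : ℝ => e.symm x + t • v) v t := by
    intro t
    simpa using ((hasDerivAt_id t).smul_const v).const_add (e.symm x)
  have hF := (hg x).hasFDerivAt
  have hcomp : HasDerivAt
      (fun t : ℝ => φ (e (e.symm x + t • v)))
      ((InnerProductSpace.toDual ℝ (EuclideanSpace ℝ (Fin k)) (e.symm (g x))) v) 0 := by
    have h0 : (fun t : ℝ => e.symm x + t • v) 0 = e.symm x := by simp
    have hF' : HasFDerivAt (fun z : EuclideanSpace ℝ (Fin k) => φ (e z))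
        (InnerProductSpace.toDual ℝ (EuclideanSpace ℝ (Fin k)) (e.symm (g x)))
        ((fun t : ℝ => e.symm x + t • v) 0) := by simpa [h0] using hF
    exact hF'.comp_hasDerivAt 0 (hc 0)
  have hD : (InnerProductSpace.toDual ℝ (EuclideanSpace ℝ (Fin k)) (e.symm (g x))) v
      = ∑ j, (y j - x j) * g x j := by
    rw [InnerProductSpace.toDual_apply_apply]
    rw [PiLp.inner_apply]
    refine Finset.sum_congr rfl fun j _ => ?_
    simp [e, hv, PiLp.toLp_apply, mul_comm]
  have hline : ∀ t : ℝ, φ (e (e.symm x + t • v)) = (φ ∘ (AffineMap.lineMap x y : ℝ →ᵃ[ℝ] (Fin k → ℝ))) t := by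
    intro t
    simp [e, hv, AffineMap.lineMap_apply, Function.comp]
    congr 1
    funext j
    simp [PiLp.toLp_apply]
    ring
  have hconv : ConvexOn ℝ Set.univ (φ ∘ (AffineMap.lineMap x y : ℝ →ᵃ[ℝ] (Fin k → ℝ))) := by
    have := hφ.comp_affineMap (AffineMap.lineMap x y : ℝ →ᵃ[ℝ] (Fin k → ℝ))
    simpa using this
  have hd2 : HasDerivAt (φ ∘ (AffineMap.lineMap x y : ℝ →ᵃ[ℝ] (Fin k → ℝ)))
      (∑ j, (y j - x j) * g x j) 0 := by
    have := hcomp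
    rw [hD] at this
    exact (funext hline) ▸ this
  have := hconv.le_slope_of_hasDerivAt (Set.mem_univ (0:ℝ)) (Set.mem_univ (1:ℝ)) zero_lt_one hd2
  have hs : slope (φ ∘ (AffineMap.lineMap x y : ℝ →ᵃ[ℝ] (Fin k → ℝ))) 0 1 = φ y - φ x := by
    rw [slope_def_field]
    simp [Function.comp, AffineMap.lineMap_apply]
  rw [hs] at this
  exact this

lemma bregman_nonneg {k : ℕ} (φ : (Fin k → ℝ) → ℝ) (g : (Fin k → ℝ) → Fin k → ℝ)
    (hφ : ConvexOn ℝ Set.univ φ)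
    (hg : ∀ x, HasGradientAt (fun y : EuclideanSpace ℝ (Fin k) => φ ((WithLp.equiv 2 (Fin k → ℝ)) y))
      ((WithLp.equiv 2 (Fin k → ℝ)).symm (g x)) ((WithLp.equiv 2 (Fin k → ℝ)).symm x))
    (x y : Fin k → ℝ) : 0 ≤ φ y - φ x - ∑ j, (y j - x j) * g x j := by
  have := tangent_le φ g hφ hg x y
  linarith

lemma breg_three {k : ℕ} (φ : (Fin k → ℝ) → ℝ) (g : (Fin k → ℝ) → Fin k → ℝ)
    (p a y : Fin k → ℝ) :
    (φ y - φ p - ∑ j, (y j - p j) * g p j) - (φ y - φ a - ∑ j, (y j - a j) * g a j)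
      = (φ a - φ p - ∑ j, (a j - p j) * g p j) + ∑ j, (y j - a j) * (g a j - g p j) := by
  have h : ∀ j ∈ Finset.univ, (y j - a j) * (g a j - g p j)
      = ((y j - a j) * g a j - (y j - p j) * g p j) + (a j - p j) * g p j := by
    intro j _; ring
  rw [Finset.sum_congr rfl h, Finset.sum_add_distrib, Finset.sum_sub_distrib]
  ring

lemma cross_zero {n k : ℕ} (hn : 0 < n) (π : Fin k → ℝ) (u v : Fin n → Fin k → ℝ)
    (hurow : ∀ i, ∑ j, u i j = 1) (hucol : ∀ j, (1 / (n : ℝ)) * ∑ i, u i j = π j)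
    (hvrow : ∀ i, ∑ j, v i j = 1) (hvcol : ∀ j, (1 / (n : ℝ)) * ∑ i, v i j = π j)
    (c : Fin n → ℝ) (d : Fin k → ℝ) :
    ∑ i, ∑ j, (u i j - v i j) * (-c i - d j) = 0 := by
  have hnR : (n : ℝ) ≠ 0 := Nat.cast_ne_zero.mpr hn.ne'
  have hrow : ∀ i, ∑ j, (u i j - v i j) = 0 := by
    intro i; rw [Finset.sum_sub_distrib, hurow, hvrow]; ring
  have hcol : ∀ j, ∑ i, (u i j - v i j) = 0 := by
    intro j
    have h1 := hucol j; have h2 := hvcol j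
    rw [Finset.sum_sub_distrib]
    have : ∑ i, u i j = ∑ i, v i j := by
      field_simp at h1 h2; linarith
    rw [this]; ring
  have hsplit : ∀ i j, (u i j - v i j) * (-c i - d j)
      = (u i j - v i j) * (-c i) + (u i j - v i j) * (-d j) := fun i j => by ring
  simp only [hsplit, Finset.sum_add_distrib]
  rw [show ∑ i, ∑ j, (u i j - v i j) * (-d j) = ∑ j, ∑ i, (u i j - v i j) * (-d j) from
    Finset.sum_comm]
  simp only [← Finset.sum_mul, hrow, hcol, zero_mul, Finset.sum_const_zero, add_zero]

/-- BGA reduces loss at least as much as UGA: with `a□` the BGA minimizer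
(satisfying the KKT conditions on `Q□_π`) and `a★` the UGA minimizer (satisfying the Lagrange
conditions on `Q_π`), for any `y ∈ Q□_π`:
`Σ_i [d_φ(p_i,y_i) − d_φ(a□_i,y_i)] ≥ Σ_i d_φ(p_i,a□_i) ≥ Σ_i d_φ(p_i,a★_i)
  = Σ_i [d_φ(p_i,y_i) − d_φ(a★_i,y_i)]`. -/
theorem bga_dominates_uga {n k : ℕ} (hn : 0 < n)
    (φ : (Fin k → ℝ) → ℝ) (g : (Fin k → ℝ) → Fin k → ℝ)
    (hφ : ConvexOn ℝ Set.univ φ)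
    (hg : ∀ x, HasGradientAt (fun y : EuclideanSpace ℝ (Fin k) => φ ((WithLp.equiv 2 (Fin k → ℝ)) y))
      ((WithLp.equiv 2 (Fin k → ℝ)).symm (g x)) ((WithLp.equiv 2 (Fin k → ℝ)).symm x))
    (p astar asq : Fin n → Fin k → ℝ) (π : Fin k → ℝ)
    (hastar : astar ∈ Qpi n k π)
    (θs : Fin n → ℝ) (lams : Fin k → ℝ)
    (hstat_star : ∀ i j, g (astar i) j - g (p i) j = -θs i - lams j)
    (hasq : asq ∈ QpiB n k π)
    (θ : Fin n → ℝ) (lam : Fin k → ℝ) (ψ : Fin n → Fin k → ℝ)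
    (hψ0 : ∀ i j, 0 ≤ ψ i j)
    (hcs : ∀ i j, ψ i j * asq i j = 0)
    (hstat_sq : ∀ i j, g (asq i) j - g (p i) j = ψ i j - θ i - lam j) :
    ∀ y ∈ QpiB n k π,
      (∑ i, (bregman φ g (p i) (y i) - bregman φ g (asq i) (y i))
          ≥ ∑ i, bregman φ g (p i) (asq i))
        ∧ (∑ i, bregman φ g (p i) (asq i) ≥ ∑ i, bregman φ g (p i) (astar i))
        ∧ (∑ i, bregman φ g (p i) (astar i)
            = ∑ i, (bregman φ g (p i) (y i) - bregman φ g (astar i) (y i))) := by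
  intro y hy
  simp only [QpiB, Qpi, Set.mem_setOf_eq] at hy hasq
  obtain ⟨⟨hyrow, hycol⟩, hy0⟩ := hy
  obtain ⟨⟨hqrow, hqcol⟩, hq0⟩ := hasq
  obtain ⟨hsrow, hscol⟩ := hastar
  have hID : ∀ (w a : Fin n → Fin k → ℝ),
      (∑ i, (bregman φ g (p i) (w i) - bregman φ g (a i) (w i)))
        = ∑ i, bregman φ g (p i) (a i)
          + ∑ i, ∑ j, (w i j - a i j) * (g (a i) j - g (p i) j) := by
    intro w a
    rw [← Finset.sum_add_distrib]
    refine Finset.sum_congr rfl fun i _ => ?_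
    simp only [bregman]
    exact breg_three φ g (p i) (a i) (w i)
  have hcz_star : ∀ (w : Fin n → Fin k → ℝ), (∀ i, ∑ j, w i j = 1) →
      (∀ j, (1 / (n : ℝ)) * ∑ i, w i j = π j) →
      ∑ i, ∑ j, (w i j - astar i j) * (g (astar i) j - g (p i) j) = 0 := by
    intro w hwrow hwcol
    simp only [hstat_star]
    exact cross_zero hn π w astar hwrow hwcol hsrow hscol θs lams
  have hnn : ∀ (a b : Fin n → Fin k → ℝ), 0 ≤ ∑ i, bregman φ g (a i) (b i) := by
    intro a b
    refine Finset.sum_nonneg fun i _ => ?_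
    simpa [bregman] using bregman_nonneg φ g hφ hg (a i) (b i)
  have hmid : ∑ i, bregman φ g (p i) (asq i)
      = ∑ i, bregman φ g (p i) (astar i) + ∑ i, bregman φ g (astar i) (asq i) := by
    have h := hID asq astar
    rw [hcz_star asq hqrow hqcol, add_zero, Finset.sum_sub_distrib] at h
    linarith
  refine ⟨?_, ?_, ?_⟩
  · rw [ge_iff_le, hID y asq]
    refine le_add_of_nonneg_right ?_
    have hz := cross_zero hn π y asq hyrow hycol hqrow hqcol θ lam
    have hsplit : ∀ i ∈ Finset.univ, ∀ j ∈ Finset.univ,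
        (y i j - asq i j) * (ψ i j - θ i - lam j)
          = y i j * ψ i j + (y i j - asq i j) * (-θ i - lam j) := by
      intro i _ j _
      linear_combination (-1 : ℝ) * hcs i j
    simp only [hstat_sq]
    rw [Finset.sum_congr rfl fun i hi => Finset.sum_congr rfl fun j hj =>
      hsplit i hi j hj]
    simp only [Finset.sum_add_distrib]
    rw [hz, add_zero]
    exact Finset.sum_nonneg fun i _ => Finset.sum_nonneg fun j _ =>
      mul_nonneg (hy0 i j) (hψ0 i j)
  · rw [hmid]
    exact le_add_of_nonneg_right (hnn astar asq)
  · rw [hID y astar, hcz_star y hyrow hycol, add_zero]
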